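/- Let S ∈ ℂ^{N×N} be unitary and Σ ∈ ℂ^{N×N} be diagonal with nonnegative real diagonal entries. Then for every unitary matrix U ∈ ℂ^{N×N}, ‖U Uᵀ − S Σ Sᵀ‖_F ≥ ‖S Sᵀ − S Σ Sᵀ‖_F; that is, over all unitary U, the Frobenius distance from U Uᵀ to S Σ Sᵀ is minimized at U = S. -/

import Mathlib

open scoped Matrix

/-- Frobenius norm of a complex matrix. -/
noncomputable def frob {N : ℕ} (A : Matrix (Fin N) (Fin N) ℂ) : ℝ :=
  Real.sqrt (∑ i, ∑ j, ‖A i j‖ ^ 2)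

lemma norm_sq_eq' (z : ℂ) : ‖z‖^2 = ((starRingEnd ℂ) z * z).re := by
  rw [Complex.sq_norm, Complex.normSq_apply, Complex.mul_re]
  simp [Complex.conj_re, Complex.conj_im]

lemma re_sq_le' (z : ℂ) : (z * z).re ≤ ‖z‖ ^ 2 := by
  rw [Complex.mul_re, Complex.sq_norm, Complex.normSq_apply]
  nlinarith [sq_nonneg z.im]

lemma frob_sq_eq_trace' {N : ℕ} (A : Matrix (Fin N) (Fin N) ℂ) :
    (∑ i, ∑ j, ‖A i j‖ ^ 2) = ((Aᴴ * A).trace).re := by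
  rw [Matrix.trace, Complex.re_sum, Finset.sum_comm]
  refine Finset.sum_congr rfl fun j _ => ?_
  rw [Matrix.diag, Matrix.mul_apply, Complex.re_sum]
  refine Finset.sum_congr rfl fun i _ => ?_
  rw [Matrix.conjTranspose_apply, norm_sq_eq']
  rfl

lemma ct_t' {N : ℕ} (A : Matrix (Fin N) (Fin N) ℂ) : (Aᵀ)ᴴ = (Aᴴ)ᵀ := by
  ext i j; simp [Matrix.conjTranspose_apply]

lemma expand' {N : ℕ} (X T : Matrix (Fin N) (Fin N) ℂ) :
    (((X - T)ᴴ * (X - T)).trace).re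
      = ((Xᴴ * X).trace).re - 2 * ((Xᴴ * T).trace).re + ((Tᴴ * T).trace).re := by
  have h : (Tᴴ * X).trace = star ((Xᴴ * T).trace) := by
    rw [← Matrix.trace_conjTranspose, Matrix.conjTranspose_mul,
      Matrix.conjTranspose_conjTranspose]
  rw [Matrix.conjTranspose_sub, Matrix.sub_mul, Matrix.mul_sub, Matrix.mul_sub,
    Matrix.trace_sub, Matrix.trace_sub, Matrix.trace_sub, h]
  simp [Complex.sub_re, Complex.add_re]
  ring

lemma cross_eq' {N : ℕ} (U S D : Matrix (Fin N) (Fin N) ℂ) :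
    ((U * Uᵀ)ᴴ * (S * D * Sᵀ)).trace = ((Uᴴ * S) * D * (Uᴴ * S)ᵀ).trace := by
  rw [Matrix.conjTranspose_mul, ct_t']
  rw [show (Uᴴ)ᵀ * Uᴴ * (S * D * Sᵀ) = (Uᴴ)ᵀ * (Uᴴ * (S * D * Sᵀ)) by noncomm_ring]
  rw [Matrix.trace_mul_comm, Matrix.transpose_mul]
  noncomm_ring

lemma sq_trace_one' {N : ℕ} (U : Matrix (Fin N) (Fin N) ℂ) (hU : U * Uᴴ = 1) :
    ((U * Uᵀ)ᴴ * (U * Uᵀ)).trace = (N : ℂ) := by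
  have hU' : Uᴴ * U = 1 := mul_eq_one_comm.mp hU
  have : (U * Uᵀ)ᴴ * (U * Uᵀ) = 1 := by
    rw [Matrix.conjTranspose_mul, ct_t']
    calc (Uᴴ)ᵀ * Uᴴ * (U * Uᵀ) = (Uᴴ)ᵀ * (Uᴴ * U) * Uᵀ := by noncomm_ring
      _ = (Uᴴ)ᵀ * Uᵀ := by rw [hU']; noncomm_ring
      _ = (U * Uᴴ)ᵀ := by rw [Matrix.transpose_mul]
      _ = 1 := by rw [hU, Matrix.transpose_one]
  rw [this, Matrix.trace_one]
  simp

lemma key_ineq' {N : ℕ} (W : Matrix (Fin N) (Fin N) ℂ) (σ : Fin N → ℝ)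
    (hW : Wᴴ * W = 1) (hσ : ∀ i, 0 ≤ σ i) :
    ((W * Matrix.diagonal (fun i => (σ i : ℂ)) * Wᵀ).trace).re ≤ ∑ i, σ i := by
  have hcol : ∀ j, (∑ i, ‖W i j‖ ^ 2) = 1 := by
    intro j
    have h2 : ∑ i, ((starRingEnd ℂ) (W i j) * W i j).re = ((Wᴴ * W) j j).re := by
      rw [Matrix.mul_apply, Complex.re_sum]
      exact Finset.sum_congr rfl fun i _ => by rw [Matrix.conjTranspose_apply]; rfl
    rw [hW] at h2
    simp only [Matrix.one_apply_eq, Complex.one_re] at h2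
    rw [← h2]
    exact Finset.sum_congr rfl fun i _ => by rw [norm_sq_eq']
  have htr : ((W * Matrix.diagonal (fun i => (σ i : ℂ)) * Wᵀ).trace).re
      = ∑ i, ∑ j, σ j * (W i j * W i j).re := by
    rw [Matrix.trace, Complex.re_sum]
    refine Finset.sum_congr rfl fun i _ => ?_
    rw [Matrix.diag, Matrix.mul_apply, Complex.re_sum]
    refine Finset.sum_congr rfl fun j _ => ?_
    rw [Matrix.mul_diagonal, Matrix.transpose_apply]
    rw [show W i j * (σ j : ℂ) * W i j = (σ j : ℂ) * (W i j * W i j) by ring]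
    rw [Complex.re_ofReal_mul]
  rw [htr]
  calc ∑ i, ∑ j, σ j * (W i j * W i j).re
      ≤ ∑ i, ∑ j, σ j * ‖W i j‖ ^ 2 := by
        refine Finset.sum_le_sum fun i _ => Finset.sum_le_sum fun j _ => ?_
        exact mul_le_mul_of_nonneg_left (re_sq_le' _) (hσ j)
    _ = ∑ j, σ j * ∑ i, ‖W i j‖ ^ 2 := by
        rw [Finset.sum_comm]
        exact Finset.sum_congr rfl fun j _ => (Finset.mul_sum _ _ _).symm
    _ = ∑ j, σ j := by
        refine Finset.sum_congr rfl fun j _ => ?_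
        rw [hcol j, mul_one]

/-- For unitary `S` and nonnegative diagonal `Σ`, the Frobenius distance from `U Uᵀ`
to `S Σ Sᵀ`, over unitary `U`, is minimized at `U = S`. -/
theorem takagi_projection_step {N : ℕ}
    (S : Matrix (Fin N) (Fin N) ℂ) (σ : Fin N → ℝ)
    (hS : S * Sᴴ = 1) (hσ : ∀ i, 0 ≤ σ i) :
    ∀ U : Matrix (Fin N) (Fin N) ℂ, U * Uᴴ = 1 →
      frob (S * Sᵀ - S * Matrix.diagonal (fun i => (σ i : ℂ)) * Sᵀ)
        ≤ frob (U * Uᵀ - S * Matrix.diagonal (fun i => (σ i : ℂ)) * Sᵀ) := by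
  intro U hU
  have hS' : Sᴴ * S = 1 := mul_eq_one_comm.mp hS
  set D : Matrix (Fin N) (Fin N) ℂ := Matrix.diagonal (fun i => (σ i : ℂ)) with hD
  set T : Matrix (Fin N) (Fin N) ℂ := S * D * Sᵀ with hT
  unfold frob
  apply Real.sqrt_le_sqrt
  rw [frob_sq_eq_trace', frob_sq_eq_trace', expand', expand']
  -- cross term for S
  have hcrossS : (((S * Sᵀ)ᴴ * T).trace).re = ∑ i, σ i := by
    rw [hT, cross_eq', hS', Matrix.one_mul, Matrix.transpose_one, Matrix.mul_one,
      hD, Matrix.trace_diagonal]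
    rw [Complex.re_sum]
    exact Finset.sum_congr rfl fun i _ => Complex.ofReal_re _
  -- cross term for U
  have hW : (Uᴴ * S)ᴴ * (Uᴴ * S) = 1 := by
    rw [Matrix.conjTranspose_mul, Matrix.conjTranspose_conjTranspose]
    calc Sᴴ * U * (Uᴴ * S) = Sᴴ * (U * Uᴴ) * S := by noncomm_ring
      _ = 1 := by rw [hU, Matrix.mul_one, hS']
  have hcrossU : (((U * Uᵀ)ᴴ * T).trace).re ≤ ∑ i, σ i := by
    rw [hT, cross_eq']
    exact key_ineq' (Uᴴ * S) σ hW hσ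
  have h1 : ((S * Sᵀ)ᴴ * (S * Sᵀ)).trace = (N : ℂ) := sq_trace_one' S hS
  have h2 : ((U * Uᵀ)ᴴ * (U * Uᵀ)).trace = (N : ℂ) := sq_trace_one' U hU
  rw [h1, h2, hcrossS]
  have := hcrossU
  linarith
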